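/- Suppose for q = 1,…,p−1 there exist operators B_q with I_p⋯I₂ A_q = B_q I_p I_{p−1}⋯I_{q+1}, and define B_p := I_p⋯I₂ A_p. If Z : ℝ → H₁ × ⋯ × H_p is differentiable with Z₁' = I_p Z₂, Z₂' = I_{p−1} Z₃, …, Z_{p−1}' = I₂ Z_p, and Z_p' = A_p Z₁ + A_{p−1} Z₂ + ⋯ + A₁ Z_p (deterministic case, no noise), then X := Z₁ is p-times differentiable and X^{(p)} = B_p X + B_{p−1} X' + ⋯ + B₁ X^{(p−1)}, i.e. Q_p(d/dt) X = 0 where Q_p(λ) = λ^p − B₁λ^{p−1} − ⋯ − B_p. -/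
import Mathlib


/-- The ordered product `I_a ⋯ I_{b+1}` of operators (empty product = identity). -/
def opChain {R : Type*} [Monoid R] (I : ℕ → R) (a b : ℕ) : R :=
  ((List.range' (b + 1) (a - b)).reverse.map I).prod

lemma opChain_self {R : Type*} [Monoid R] (I : ℕ → R) (a : ℕ) : opChain I a a = 1 := by
  simp [opChain]

lemma opChain_step {R : Type*} [Monoid R] (I : ℕ → R) (a b : ℕ) (h : b < a) :
    opChain I a b = opChain I a (b + 1) * I (b + 1) := by
  unfold opChain
  have h1 : a - b = (a - (b + 1)) + 1 := by omega
  rw [h1, List.range'_succ]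
  simp

/-- If `Z₁' = I_p Z₂, …, Z_{p−1}' = I₂ Z_p` and
`Z_p' = A_p Z₁ + ⋯ + A₁ Z_p` (deterministic case), and the intertwining relations
`I_p⋯I₂ A_q = B_q I_p⋯I_{q+1}` (`q = 1,…,p−1`), `B_p = I_p⋯I₂ A_p` hold, then `X := Z₁`
is `p`-times differentiable and `X^{(p)} = Σ_{q=1}^p B_q X^{(p−q)}`, i.e. `Q_p(d/dt)X = 0`. -/
theorem car_pth_order_ode
    {E : Type*} [NormedAddCommGroup E] [NormedSpace ℝ E] [CompleteSpace E]
    (p : ℕ) (hp : 1 ≤ p)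
    (I A B : ℕ → E →L[ℝ] E)
    (hB : ∀ q ∈ Finset.Icc 1 (p - 1), opChain I p 1 * A q = B q * opChain I p q)
    (hBp : B p = opChain I p 1 * A p)
    (Z : ℕ → ℝ → E)
    (hderiv : ∀ j ∈ Finset.Icc 1 (p - 1), ∀ t : ℝ,
      HasDerivAt (Z j) (I (p + 1 - j) (Z (j + 1) t)) t)
    (hderivp : ∀ t : ℝ,
      HasDerivAt (Z p) (∑ q ∈ Finset.Icc 1 p, A q (Z (p + 1 - q) t)) t) :
    ContDiff ℝ (p : ℕ∞) (Z 1)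
    ∧ ∀ t : ℝ,
        iteratedDeriv p (Z 1) t
          = ∑ q ∈ Finset.Icc 1 p, B q (iteratedDeriv (p - q) (Z 1) t) := by
  -- every `Z j` (1 ≤ j ≤ p) is differentiable
  have hdiff : ∀ j, 1 ≤ j → j ≤ p → Differentiable ℝ (Z j) := by
    intro j h1 h2 t
    rcases eq_or_lt_of_le h2 with rfl | hlt
    · exact (hderivp t).differentiableAt
    · exact (hderiv j (Finset.mem_Icc.2 ⟨h1, by omega⟩) t).differentiableAt
  -- the derivative of `Z j`
  have hd1 : ∀ j, 1 ≤ j → j ≤ p - 1 →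
      deriv (Z j) = fun t => I (p + 1 - j) (Z (j + 1) t) := by
    intro j h1 h2
    funext t
    exact (hderiv j (Finset.mem_Icc.2 ⟨h1, h2⟩) t).deriv
  have hdp : deriv (Z p) = fun t => ∑ q ∈ Finset.Icc 1 p, A q (Z (p + 1 - q) t) := by
    funext t; exact (hderivp t).deriv
  -- every `Z j` is `C^n` for every `n`
  have hC : ∀ n : ℕ, ∀ j, 1 ≤ j → j ≤ p → ContDiff ℝ (n : ℕ∞) (Z j) := by
    intro n
    induction n with
    | zero =>
      intro j h1 h2
      exact contDiff_zero.2 (hdiff j h1 h2).continuous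
    | succ n ih =>
      intro j h1 h2
      have hcast : (((n + 1 : ℕ) : ℕ∞) : WithTop ℕ∞) = ((n : ℕ∞) : WithTop ℕ∞) + 1 := by
        push_cast; ring
      rw [hcast, contDiff_succ_iff_deriv]
      refine ⟨hdiff j h1 h2, by simp, ?_⟩
      rcases eq_or_lt_of_le h2 with rfl | hlt
      · rw [hdp]
        exact ContDiff.sum fun q hq => by
          have hq' := Finset.mem_Icc.1 hq
          exact (A q).contDiff.comp (ih (j + 1 - q) (by omega) (by omega))
      · rw [hd1 j h1 (by omega)]
        exact (I (p + 1 - j)).contDiff.comp (ih (j + 1) (by omega) (by omega))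
  -- the iterated derivatives of `Z 1`
  have hit : ∀ k, k ≤ p - 1 →
      iteratedDeriv k (Z 1) = fun t => opChain I p (p - k) (Z (k + 1) t) := by
    intro k
    induction k with
    | zero =>
      intro _
      have : p - 0 = p := by omega
      rw [this, iteratedDeriv_zero, opChain_self]
      simp
    | succ k ih =>
      intro hk
      rw [iteratedDeriv_succ, ih (by omega)]
      funext t
      have hder : HasDerivAt (fun t => opChain I p (p - k) (Z (k + 1) t))
          (opChain I p (p - k) (I (p + 1 - (k + 1)) (Z (k + 2) t))) t :=
        (opChain I p (p - k)).hasFDerivAt.comp_hasDerivAt t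
          (hderiv (k + 1) (Finset.mem_Icc.2 ⟨by omega, hk⟩) t)
      rw [hder.deriv]
      have h2 : p + 1 - (k + 1) = (p - (k + 1)) + 1 := by omega
      have h3 : p - k = (p - (k + 1)) + 1 := by omega
      rw [opChain_step I p (p - (k + 1)) (by omega), h2, ← h3]
      rfl
  refine ⟨hC p 1 le_rfl hp, fun t => ?_⟩
  -- the `p`-th derivative
  have hp1 : p = (p - 1) + 1 := by omega
  rw [hp1, iteratedDeriv_succ, hit (p - 1) le_rfl]
  have h4 : p - (p - 1) = 1 := by omega
  have h5 : (p - 1) + 1 = p := by omega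
  rw [h4, h5]
  have hder : HasDerivAt (fun t => opChain I p 1 (Z p t))
      (opChain I p 1 (∑ q ∈ Finset.Icc 1 p, A q (Z (p + 1 - q) t))) t :=
    (opChain I p 1).hasFDerivAt.comp_hasDerivAt t (hderivp t)
  rw [hder.deriv, map_sum]
  refine Finset.sum_congr rfl fun q hq => ?_
  have hq' := Finset.mem_Icc.1 hq
  rcases eq_or_lt_of_le hq'.2 with rfl | hlt
  · have : q - q = 0 := by omega
    rw [this, iteratedDeriv_zero, hBp]
    have : q + 1 - q = 1 := by omega
    rw [this]
    rfl
  · -- q ≤ p - 1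
    rw [hit (p - q) (by omega)]
    have h6 : p - (p - q) = q := by omega
    have h7 : (p - q) + 1 = p + 1 - q := by omega
    rw [h6, h7]
    have := hB q (Finset.mem_Icc.2 ⟨hq'.1, by omega⟩)
    calc opChain I p 1 (A q (Z (p + 1 - q) t))
        = (opChain I p 1 * A q) (Z (p + 1 - q) t) := rfl
      _ = (B q * opChain I p q) (Z (p + 1 - q) t) := by rw [this]
      _ = B q (opChain I p q (Z (p + 1 - q) t)) := rfl
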